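/- Let M be a binary matroid and C a circuit of M with k ≥ 4 elements having no chord. Then e_C ∉ ℑ(𝔠_{k−1}), i.e., the monomial of C does not lie in the ideal generated by differentials of circuits with at most k−1 elements. -/

import Mathlib

open ExteriorAlgebra

/-- The Grassmann algebra over `K` on generators `e 0, ..., e (n-1)`. -/
abbrev Grass (K : Type) [Field K] (n : ℕ) := ExteriorAlgebra K (Fin n → K)

/-- The generator `e i`. -/
noncomputable def gen (K : Type) [Field K] (n : ℕ) (i : Fin n) : Grass K n :=
  ExteriorAlgebra.ι K (Pi.single i 1)

/-- The monomial associated to a list of indices. -/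
noncomputable def monList (K : Type) [Field K] (n : ℕ) (l : List (Fin n)) : Grass K n :=
  (l.map (gen K n)).prod

/-- The monomial `e_X` of a subset `X ⊆ [n]`, factors in increasing order. -/
noncomputable def mon (K : Type) [Field K] (n : ℕ) (X : Finset (Fin n)) : Grass K n :=
  monList K n (X.sort (· ≤ ·))

/-- The degree `-1` antiderivation `∂` on the Grassmann algebra with `∂ (e i) = 1`
(left contraction with the covector sending each generator to `1`). -/
noncomputable def bd (K : Type) [Field K] (n : ℕ) : Grass K n →ₗ[K] Grass K n :=
  CliffordAlgebra.contractLeft (∑ i : Fin n, LinearMap.proj i)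

/-- The two-sided ideal `ℑ(𝔛)` generated by the differentials `∂ e_Y`, `Y ∈ 𝔛`. -/
noncomputable def OSIdeal (K : Type) [Field K] (n : ℕ) (X : Set (Finset (Fin n))) :
    TwoSidedIdeal (Grass K n) :=
  TwoSidedIdeal.span ((fun Y => bd K n (mon K n Y)) '' X)

/-- A circuit of a matroid: a minimal dependent (finite) set. -/
def IsCircuit {α : Type} [DecidableEq α] (M : Matroid α) (C : Finset α) : Prop :=
  M.Dep (C : Set α) ∧ ∀ D : Finset α, D ⊂ C → ¬ M.Dep (D : Set α)

/-- `i` is a chord of the circuit `C`, witnessed by circuits `C₁, C₂` with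
`C₁ ∩ C₂ = {i}` and `C = C₁ Δ C₂`. -/
def IsChord {α : Type} [DecidableEq α] (M : Matroid α) (C : Finset α) (i : α) : Prop :=
  ∃ C₁ C₂ : Finset α, IsCircuit M C₁ ∧ IsCircuit M C₂ ∧ C₁ ∩ C₂ = {i} ∧ C = symmDiff C₁ C₂

def HasChord {α : Type} [DecidableEq α] (M : Matroid α) (C : Finset α) : Prop :=
  ∃ i, IsChord M C i

/-- `M` is `ℓ`-chordal: every circuit with at least `ℓ` elements has a chord. -/
def Chordal {α : Type} [DecidableEq α] (M : Matroid α) (l : ℕ) : Prop :=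
  ∀ C : Finset α, IsCircuit M C → l ≤ C.card → HasChord M C

/-- `M` is simple: every circuit has at least 3 elements. -/
def SimpleM {α : Type} [DecidableEq α] (M : Matroid α) : Prop :=
  ∀ C : Finset α, IsCircuit M C → 3 ≤ C.card

/-- `M` is binary: the symmetric difference of two distinct circuits contains a circuit. -/
def BinaryM {α : Type} [DecidableEq α] (M : Matroid α) : Prop :=
  ∀ C D : Finset α, IsCircuit M C → IsCircuit M D → C ≠ D →
    ∃ C', IsCircuit M C' ∧ C' ⊆ symmDiff C D

/-- The set `𝔠` of circuits of `M`. -/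
def Circuits {α : Type} [DecidableEq α] (M : Matroid α) : Set (Finset α) :=
  {C | IsCircuit M C}

/-- The set `𝔠_k` of circuits of `M` with at most `k` elements. -/
def CircuitsLe {α : Type} [DecidableEq α] (M : Matroid α) (k : ℕ) : Set (Finset α) :=
  {C | IsCircuit M C ∧ C.card ≤ k}

-- Auxiliary section to append before the theorem
section Aux

variable (K : Type) [Field K] (n : ℕ)

lemma monList_cons (a : Fin n) (l : List (Fin n)) :
    monList K n (a :: l) = gen K n a * monList K n l := by
  simp [monList]

lemma bd_gen_mul (a : Fin n) (x : Grass K n) :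
    bd K n (gen K n a * x) = x - gen K n a * bd K n x := by
  show CliffordAlgebra.contractLeft _ (CliffordAlgebra.ι _ _ * x) = _
  rw [CliffordAlgebra.contractLeft_ι_mul]
  congr 1
  simp [Pi.single_apply, Finset.sum_ite_eq']

noncomputable def ctr (a : Fin n) : Grass K n →ₗ[K] Grass K n :=
  CliffordAlgebra.contractLeft ((LinearMap.proj a : (Fin n → K) →ₗ[K] K))

lemma ctr_gen_mul (a b : Fin n) (x : Grass K n) :
    ctr K n a (gen K n b * x) = ((Pi.single b 1 : Fin n → K) a) • x - gen K n b * ctr K n a x := by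
  show CliffordAlgebra.contractLeft _ (CliffordAlgebra.ι _ _ * x) = _
  rw [CliffordAlgebra.contractLeft_ι_mul]
  rfl

lemma ctr_monList_notMem (a : Fin n) (l : List (Fin n)) (h : a ∉ l) :
    ctr K n a (monList K n l) = 0 := by
  induction l with
  | nil =>
    unfold ctr monList; simp
  | cons b l ih =>
    have hab : a ≠ b := fun e => h (e ▸ List.mem_cons_self (a := b) (l := l))
    rw [monList_cons, ctr_gen_mul, ih (fun hl => h (List.mem_cons_of_mem _ hl)),
      Pi.single_eq_of_ne hab, zero_smul, mul_zero, sub_zero]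

lemma monList_ne_zero (l : List (Fin n)) (h : l.Nodup) : monList K n l ≠ 0 := by
  induction l with
  | nil => simp [monList]
  | cons a l ih =>
    intro h0
    have h1 : ctr K n a (monList K n (a :: l)) = monList K n l := by
      rw [monList_cons, ctr_gen_mul, ctr_monList_notMem K n a l (List.nodup_cons.mp h).1,
        mul_zero, sub_zero, Pi.single_eq_same, one_smul]
    rw [h0, map_zero] at h1
    exact ih (List.nodup_cons.mp h).2 h1.symm

/-- The algebra endomorphism of the Grassmann algebra killing generators outside `C`. -/
noncomputable def keepHom (C : Finset (Fin n)) : Grass K n →ₐ[K] Grass K n :=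
  ExteriorAlgebra.map (LinearMap.pi (fun i => if i ∈ C then (LinearMap.proj i : (Fin n → K) →ₗ[K] K) else 0))

lemma keepHom_gen (C : Finset (Fin n)) (j : Fin n) :
    keepHom K n C (gen K n j) = if j ∈ C then gen K n j else 0 := by
  unfold keepHom gen
  rw [ExteriorAlgebra.map_apply_ι]
  have hv : (LinearMap.pi (fun i => if i ∈ C then (LinearMap.proj i : (Fin n → K) →ₗ[K] K) else 0))
      (Pi.single j 1) = if j ∈ C then (Pi.single j 1 : Fin n → K) else 0 := by
    funext i
    simp only [LinearMap.pi_apply]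
    by_cases hi : i ∈ C <;> by_cases hj : j ∈ C <;>
      by_cases hij : i = j <;>
      simp_all [Pi.single_apply]
  rw [hv]
  split_ifs
  · rfl
  · simp

lemma keepHom_monList_mem (C : Finset (Fin n)) (l : List (Fin n)) (h : ∀ j ∈ l, j ∈ C) :
    keepHom K n C (monList K n l) = monList K n l := by
  induction l with
  | nil => simp [monList]
  | cons a l ih =>
    rw [monList_cons, map_mul, keepHom_gen, if_pos (h a (List.mem_cons_self (a := a) (l := l))),
      ih (fun j hj => h j (List.mem_cons_of_mem _ hj)), ← monList_cons]

lemma keepHom_monList_zero (C : Finset (Fin n)) (l : List (Fin n)) (h : ∃ j ∈ l, j ∉ C) :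
    keepHom K n C (monList K n l) = 0 := by
  induction l with
  | nil => simp at h
  | cons a l ih =>
    rw [monList_cons, map_mul]
    obtain ⟨j, hj, hjC⟩ := h
    rcases List.mem_cons.mp hj with rfl | hjl
    · rw [keepHom_gen, if_neg hjC, zero_mul]
    · rw [ih ⟨j, hjl, hjC⟩, mul_zero]

lemma keepHom_bd_monList (C : Finset (Fin n)) (l : List (Fin n)) (j₁ j₂ : Fin n)
    (h₁ : j₁ ∈ l) (h₂ : j₂ ∈ l) (hne : j₁ ≠ j₂) (h₁C : j₁ ∉ C) (h₂C : j₂ ∉ C) :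
    keepHom K n C (bd K n (monList K n l)) = 0 := by
  induction l with
  | nil => simp at h₁
  | cons a l ih =>
    rw [monList_cons, bd_gen_mul, map_sub, map_mul]
    by_cases ha : a ∈ C
    · have h1l : j₁ ∈ l := by
        rcases List.mem_cons.mp h₁ with rfl | h1l
        · exact absurd ha h₁C
        · exact h1l
      have h2l : j₂ ∈ l := by
        rcases List.mem_cons.mp h₂ with rfl | h2l
        · exact absurd ha h₂C
        · exact h2l
      rw [keepHom_monList_zero K n C l ⟨j₁, h1l, h₁C⟩, ih h1l h2l, mul_zero, sub_zero]
    · have hex : ∃ j ∈ l, j ∉ C := by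
        rcases List.mem_cons.mp h₁ with rfl | h1l
        · rcases List.mem_cons.mp h₂ with rfl | h2l
          · exact absurd rfl hne
          · exact ⟨j₂, h2l, h₂C⟩
        · exact ⟨j₁, h1l, h₁C⟩
      rw [keepHom_monList_zero K n C l hex, keepHom_gen, if_neg ha, zero_mul]
      simp

end Aux
/-- Key combinatorial lemma: in a simple binary matroid, if circuit `C` has no chord, then any
circuit `D` with fewer elements has at least two elements outside `C`. -/
lemma two_outside {n : ℕ} (M : Matroid (Fin n)) (hs : SimpleM M) (hb : BinaryM M)
    (C : Finset (Fin n)) (hC : IsCircuit M C) (hk : 4 ≤ C.card) (hch : ¬ HasChord M C)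
    (D : Finset (Fin n)) (hD : IsCircuit M D) (hcard : D.card ≤ C.card - 1) :
    ∃ j₁ ∈ D \ C, ∃ j₂ ∈ D \ C, j₁ ≠ j₂ := by
  have hDlt : D.card < C.card := by omega
  rw [← Finset.one_lt_card]
  by_contra hle
  push_neg at hle
  interval_cases h : (D \ C).card
  · -- D ⊆ C, proper subset: contradicts minimality of C
    have hsubC : D ⊆ C := Finset.sdiff_eq_empty_iff_subset.mp (Finset.card_eq_zero.mp h)
    have hss : D ⊂ C := Finset.ssubset_iff_subset_ne.mpr ⟨hsubC, fun e => by
      rw [e] at hDlt; omega⟩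
    exact hC.2 D hss hD.1
  · -- D \ C = {j} : then j is a chord of C
    obtain ⟨j, hj⟩ := Finset.card_eq_one.mp h
    have hjD : j ∈ D := by
      have : j ∈ D \ C := hj ▸ Finset.mem_singleton_self j
      exact (Finset.mem_sdiff.mp this).1
    have hjC : j ∉ C := by
      have : j ∈ D \ C := hj ▸ Finset.mem_singleton_self j
      exact (Finset.mem_sdiff.mp this).2
    have hsub : ∀ x ∈ D, x ≠ j → x ∈ C := by
      intro x hx hxj
      by_contra hxC
      have : x ∈ D \ C := Finset.mem_sdiff.mpr ⟨hx, hxC⟩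
      rw [hj, Finset.mem_singleton] at this
      exact hxj this
    -- an element of D ∩ C
    obtain ⟨a, ha, b, hbD, hab⟩ := Finset.one_lt_card.mp (show 1 < D.card by
      have := hs D hD; omega)
    obtain ⟨x0, hx0D, hx0j⟩ : ∃ x0 ∈ D, x0 ≠ j := by
      by_cases haj : a = j
      · exact ⟨b, hbD, fun e => hab (haj.trans e.symm)⟩
      · exact ⟨a, ha, haj⟩
    have hx0C : x0 ∈ C := hsub x0 hx0D hx0j
    have hCD : C ≠ D := fun e => by rw [e] at hDlt; omega
    obtain ⟨C', hC', hC'sub⟩ := hb C D hC hD hCD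
    have hjC' : j ∈ C' := by
      by_contra hjC'
      have hsubC : C' ⊆ C := by
        intro x hx
        have hx2 := hC'sub hx
        rw [Finset.mem_symmDiff] at hx2
        rcases hx2 with ⟨hxC, _⟩ | ⟨hxD, hxC⟩
        · exact hxC
        · exfalso
          have hxj : x = j := by
            have : x ∈ D \ C := Finset.mem_sdiff.mpr ⟨hxD, hxC⟩
            rwa [hj, Finset.mem_singleton] at this
          exact hjC' (hxj ▸ hx)
      have hne : C' ≠ C := by
        intro e
        have hx0C' : x0 ∈ C' := e ▸ hx0C
        have := hC'sub hx0C'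
        rw [Finset.mem_symmDiff] at this
        tauto
      exact hC.2 C' (Finset.ssubset_iff_subset_ne.mpr ⟨hsubC, hne⟩) hC'.1
    have hinter : D ∩ C' = {j} := by
      ext x
      rw [Finset.mem_inter, Finset.mem_singleton]
      constructor
      · rintro ⟨hxD, hxC'⟩
        have := hC'sub hxC'
        rw [Finset.mem_symmDiff] at this
        rcases this with ⟨_, hxD'⟩ | ⟨_, hxC⟩
        · exact absurd hxD hxD'
        · have : x ∈ D \ C := Finset.mem_sdiff.mpr ⟨hxD, hxC⟩
          rwa [hj, Finset.mem_singleton] at this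
      · rintro rfl
        exact ⟨hjD, hjC'⟩
    have hDC' : D ≠ C' := by
      intro e
      have := hC'sub (e ▸ hx0D)
      rw [Finset.mem_symmDiff] at this
      tauto
    obtain ⟨C'', hC''c, hC''sub⟩ := hb D C' hD hC' hDC'
    have hDC'C : symmDiff D C' ⊆ C := by
      intro x hx
      rw [Finset.mem_symmDiff] at hx
      rcases hx with ⟨hxD, hxC'⟩ | ⟨hxC', hxD⟩
      · exact hsub x hxD (fun e => hxC' (e ▸ hjC'))
      · have := hC'sub hxC'
        rw [Finset.mem_symmDiff] at this
        tauto
    have hC''C : C'' = C := by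
      by_contra hne
      exact hC.2 C'' (Finset.ssubset_iff_subset_ne.mpr ⟨hC''sub.trans hDC'C, hne⟩) hC''c.1
    have hCeq : C = symmDiff D C' := Finset.Subset.antisymm (hC''C ▸ hC''sub) hDC'C
    exact hch ⟨j, D, C', hD, hC', hinter, hCeq⟩

/-- in a binary matroid, if a circuit `C` with `|C| = k ≥ 4` has no chord,
then `e_C ∉ ℑ(𝔠_{k-1})`. -/
theorem stmt9 (K : Type) [Field K] (n : ℕ) (M : Matroid (Fin n)) (hE : M.E = Set.univ)
    (hs : SimpleM M) (hb : BinaryM M) (C : Finset (Fin n)) (hC : IsCircuit M C)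
    (hk : 4 ≤ C.card) (hch : ¬ HasChord M C) :
    mon K n C ∉ OSIdeal K n (CircuitsLe M (C.card - 1)) := by
  intro hmem
  rw [OSIdeal, TwoSidedIdeal.mem_span_iff] at hmem
  have hker := hmem (TwoSidedIdeal.ker (keepHom K n C)) ?_
  · rw [TwoSidedIdeal.mem_ker] at hker
    have hfix : keepHom K n C (mon K n C) = mon K n C := by
      apply keepHom_monList_mem
      intro j hj
      exact (Finset.mem_sort _).mp hj
    rw [hfix] at hker
    exact monList_ne_zero K n _ (Finset.sort_nodup C _) hker
  · rintro x ⟨Y, hY, rfl⟩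
    rw [SetLike.mem_coe, TwoSidedIdeal.mem_ker]
    obtain ⟨hYc, hYcard⟩ := hY
    obtain ⟨j₁, hj₁, j₂, hj₂, hne⟩ := two_outside M hs hb C hC hk hch Y hYc hYcard
    exact keepHom_bd_monList K n C _ j₁ j₂
      ((Finset.mem_sort _).mpr (Finset.mem_sdiff.mp hj₁).1)
      ((Finset.mem_sort _).mpr (Finset.mem_sdiff.mp hj₂).1)
      hne (Finset.mem_sdiff.mp hj₁).2 (Finset.mem_sdiff.mp hj₂).2
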